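/- Let n ≥ 1, let A : Fin n → Fin n → Prop be a Boolean matrix, let U, V, W : {1,…,n} → Fin n → Prop be query vectors, and let 1 ≤ ℓ ≤ n be the index of the current query. Let G_ℓ be the query-gadget graph: vertex set {0,1,2,3} × Fin n × {0,1,…,n} (gadget index g, row i, column j), with edges (symmetric): path edges (g,i,j) ~ (g,i,j+1) for 1 ≤ j ≤ n−1; query edges (g,i,0) ~ (g,i,q) for 1 ≤ q ≤ ℓ whenever the corresponding query bit holds (U q i for g ∈ {0,3}, V q i for g = 1, W q i for g = 2); and cross edges (0,i,n) ~ (1,j,0) whenever A i j, (1,j,n) ~ (2,k,0) whenever A j k, and (2,k,n) ~ (3,i,0) whenever A k i. Then for every row i : Fin n: (a) the extended distance in G_ℓ (valued in ℕ∞, with ∞ for unreachable pairs) from (0,i,0) to (3,i,n) is at least 3 + 4(n+1−ℓ); and (b) it equals 3 + 4(n+1−ℓ) if and only if there exist j, k with U ℓ i, V ℓ j, W ℓ k, A i j, A j k and A k i. -/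

import Mathlib

set_option maxHeartbeats 1000000

namespace Omv3Aux

def Rel (n : ℕ) (A : Fin n → Fin n → Prop) (U Vq Wq : ℕ → Fin n → Prop) (ℓ : ℕ)
    (x y : Fin 4 × Fin n × Fin (n + 1)) : Prop :=
  (x.1 = y.1 ∧ x.2.1 = y.2.1 ∧ 1 ≤ (x.2.2 : ℕ) ∧ (y.2.2 : ℕ) = (x.2.2 : ℕ) + 1) ∨
  (x.1 = y.1 ∧ x.2.1 = y.2.1 ∧ (x.2.2 : ℕ) = 0 ∧ 1 ≤ (y.2.2 : ℕ) ∧ (y.2.2 : ℕ) ≤ ℓ ∧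
    (((x.1 : ℕ) = 0 ∨ (x.1 : ℕ) = 3) → U (y.2.2 : ℕ) x.2.1) ∧
    ((x.1 : ℕ) = 1 → Vq (y.2.2 : ℕ) x.2.1) ∧
    ((x.1 : ℕ) = 2 → Wq (y.2.2 : ℕ) x.2.1)) ∨
  ((y.1 : ℕ) = (x.1 : ℕ) + 1 ∧ (x.2.2 : ℕ) = n ∧ (y.2.2 : ℕ) = 0 ∧ A x.2.1 y.2.1)

def pot (n ℓ : ℕ) (x : Fin 4 × Fin n × Fin (n + 1)) : ℕ :=
  (n + 2 - ℓ) * (x.1 : ℕ) + min (x.2.2 : ℕ) 1 + (max (x.2.2 : ℕ) ℓ - ℓ)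

lemma pot_lip {n : ℕ} {A : Fin n → Fin n → Prop} {U Vq Wq : ℕ → Fin n → Prop} {ℓ : ℕ}
    (hn : 1 ≤ n) (hℓ1 : 1 ≤ ℓ) (hℓn : ℓ ≤ n)
    {x y : Fin 4 × Fin n × Fin (n + 1)} (h : Rel n A U Vq Wq ℓ x y) :
    pot n ℓ y ≤ pot n ℓ x + 1 ∧ pot n ℓ x ≤ pot n ℓ y + 1 := by
  unfold pot
  rcases h with ⟨h1, h2, h3, h4⟩ | ⟨h1, h2, h3, h4, h5, -⟩ | ⟨h1, h2, h3, -⟩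
  · have e1 : (n + 2 - ℓ) * ((y.1 : ℕ)) = (n + 2 - ℓ) * ((x.1 : ℕ)) := by rw [h1]
    omega
  · have e1 : (n + 2 - ℓ) * ((y.1 : ℕ)) = (n + 2 - ℓ) * ((x.1 : ℕ)) := by rw [h1]
    omega
  · have e1 : (n + 2 - ℓ) * ((y.1 : ℕ)) = (n + 2 - ℓ) * ((x.1 : ℕ)) + (n + 2 - ℓ) := by
      rw [h1]; ring
    omega

lemma pot_walk {n : ℕ} {A : Fin n → Fin n → Prop} {U Vq Wq : ℕ → Fin n → Prop} {ℓ : ℕ}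
    (hn : 1 ≤ n) (hℓ1 : 1 ≤ ℓ) (hℓn : ℓ ≤ n)
    {x y : Fin 4 × Fin n × Fin (n + 1)}
    (w : (SimpleGraph.fromRel (Rel n A U Vq Wq ℓ)).Walk x y) :
    pot n ℓ y ≤ pot n ℓ x + w.length := by
  induction w with
  | nil => simp
  | cons h p ih =>
    rw [SimpleGraph.Walk.length_cons]
    rcases ((SimpleGraph.fromRel_adj _ _ _).mp h).2 with hr | hr
    · have := pot_lip hn hℓ1 hℓn hr; omega
    · have := pot_lip hn hℓ1 hℓn hr; omega

def Cp (n : ℕ) (A : Fin n → Fin n → Prop) (U Vq Wq : ℕ → Fin n → Prop) (ℓ : ℕ)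
    (i : Fin n) (g : ℕ) (r : Fin n) (m : ℕ) : Prop :=
  (g = 0 → (∃ j k, A r j ∧ Vq ℓ j ∧ A j k ∧ Wq ℓ k ∧ A k i) ∧ U ℓ i ∧ (m = 0 → U ℓ r)) ∧
  (g = 1 → (∃ k, A r k ∧ Wq ℓ k ∧ A k i) ∧ U ℓ i ∧ (m = 0 → Vq ℓ r)) ∧
  (g = 2 → A r i ∧ U ℓ i ∧ (m = 0 → Wq ℓ r)) ∧
  (g = 3 → r = i ∧ (m = 0 → U ℓ r)) ∧
  (m = 0 ∨ ℓ ≤ m)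

lemma Cp_step {n : ℕ} {A : Fin n → Fin n → Prop} {U Vq Wq : ℕ → Fin n → Prop} {ℓ : ℕ}
    {i : Fin n} {g : ℕ} {r : Fin n} {m : ℕ} (h1 : 1 ≤ m) (h2 : ℓ ≤ m)
    (h : Cp n A U Vq Wq ℓ i g r (m + 1)) : Cp n A U Vq Wq ℓ i g r m := by
  obtain ⟨c0, c1, c2, c3, -⟩ := h
  exact ⟨fun hg => ⟨(c0 hg).1, (c0 hg).2.1, fun h0 => absurd h0 (by omega)⟩,
         fun hg => ⟨(c1 hg).1, (c1 hg).2.1, fun h0 => absurd h0 (by omega)⟩,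
         fun hg => ⟨(c2 hg).1, (c2 hg).2.1, fun h0 => absurd h0 (by omega)⟩,
         fun hg => ⟨(c3 hg).1, fun h0 => absurd h0 (by omega)⟩,
         Or.inr h2⟩

lemma key {n : ℕ} {A : Fin n → Fin n → Prop} {U Vq Wq : ℕ → Fin n → Prop} {ℓ : ℕ}
    (hn : 1 ≤ n) (hℓ1 : 1 ≤ ℓ) (hℓn : ℓ ≤ n) (i : Fin n) :
    ∀ (x t : Fin 4 × Fin n × Fin (n + 1))
      (w : (SimpleGraph.fromRel (Rel n A U Vq Wq ℓ)).Walk x t),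
      t = (⟨3, by decide⟩, i, ⟨n, Nat.lt_succ_self n⟩) →
      pot n ℓ x + w.length = pot n ℓ t →
      Cp n A U Vq Wq ℓ i (x.1 : ℕ) x.2.1 (x.2.2 : ℕ) := by
  intro x t w
  induction w with
  | nil =>
    intro ht _
    subst ht
    show Cp n A U Vq Wq ℓ i 3 i n
    exact ⟨fun h => absurd h (by omega), fun h => absurd h (by omega),
           fun h => absurd h (by omega),
           fun _ => ⟨rfl, fun h0 => absurd h0 (by omega)⟩, Or.inr hℓn⟩
  | @cons u b _ h p ih =>
    intro ht hlen
    rw [SimpleGraph.Walk.length_cons] at hlen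
    have hwb := pot_walk hn hℓ1 hℓn p
    obtain ⟨hne, hr⟩ := (SimpleGraph.fromRel_adj _ _ _).mp h
    have hlipb : pot n ℓ b ≤ pot n ℓ u + 1 := by
      rcases hr with hr | hr
      exacts [(pot_lip hn hℓ1 hℓn hr).1, (pot_lip hn hℓ1 hℓn hr).2]
    have hb : pot n ℓ b = pot n ℓ u + 1 := by omega
    have hC := ih ht (by omega)
    rcases hr with (⟨h1, h2, h3, h4⟩ | ⟨h1, h2, h3, h4, h5, hU, hV, hW⟩ | ⟨h1, h2, h3, hA⟩) |
      (⟨h1, h2, h3, h4⟩ | ⟨h1, h2, h3, h4, h5, hU, hV, hW⟩ | ⟨h1, h2, h3, hA⟩)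
    · -- path forward
      have e1 : (n + 2 - ℓ) * ((b.1 : ℕ)) = (n + 2 - ℓ) * ((u.1 : ℕ)) := by rw [h1]
      unfold pot at hb
      have hm : ℓ ≤ (u.2.2 : ℕ) := by omega
      have hC' : Cp n A U Vq Wq ℓ i (u.1 : ℕ) u.2.1 ((u.2.2 : ℕ) + 1) := by
        rw [h1, h2, ← h4]; exact hC
      exact Cp_step h3 hm hC'
    · -- query forward
      have hq : (b.2.2 : ℕ) = ℓ := by
        rcases hC.2.2.2.2 with h' | h' <;> omega
      have hC' : Cp n A U Vq Wq ℓ i (u.1 : ℕ) u.2.1 ℓ := by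
        rw [hq] at hC; rw [h1, h2]; exact hC
      rw [hq] at hU hV hW
      rw [h3]
      exact ⟨fun hg => ⟨(hC'.1 hg).1, (hC'.1 hg).2.1, fun _ => hU (Or.inl hg)⟩,
             fun hg => ⟨(hC'.2.1 hg).1, (hC'.2.1 hg).2.1, fun _ => hV hg⟩,
             fun hg => ⟨(hC'.2.2.1 hg).1, (hC'.2.2.1 hg).2.1, fun _ => hW hg⟩,
             fun hg => ⟨(hC'.2.2.2.1 hg).1, fun _ => hU (Or.inr hg)⟩,
             Or.inl rfl⟩
    · -- cross forward
      have hg4 : (b.1 : ℕ) < 4 := b.1.isLt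
      have hC' : Cp n A U Vq Wq ℓ i (b.1 : ℕ) b.2.1 0 := by rw [← h3]; exact hC
      rw [h2]
      refine ⟨?_, ?_, ?_, ?_, Or.inr hℓn⟩
      · intro hg
        have hb1 : (b.1 : ℕ) = 1 := by omega
        obtain ⟨⟨k, hk1, hk2, hk3⟩, hUi, hVb⟩ := hC'.2.1 hb1
        exact ⟨⟨b.2.1, k, hA, hVb rfl, hk1, hk2, hk3⟩, hUi, fun h0 => absurd h0 (by omega)⟩
      · intro hg
        have hb1 : (b.1 : ℕ) = 2 := by omega
        obtain ⟨hA2, hUi, hWb⟩ := hC'.2.2.1 hb1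
        exact ⟨⟨b.2.1, hA, hWb rfl, hA2⟩, hUi, fun h0 => absurd h0 (by omega)⟩
      · intro hg
        have hb1 : (b.1 : ℕ) = 3 := by omega
        obtain ⟨hri, hUb⟩ := hC'.2.2.2.1 hb1
        exact ⟨hri ▸ hA, hri ▸ hUb rfl, fun h0 => absurd h0 (by omega)⟩
      · intro hg
        exact absurd h1 (by omega)
    · -- path reverse : impossible
      exfalso
      have e1 : (n + 2 - ℓ) * ((b.1 : ℕ)) = (n + 2 - ℓ) * ((u.1 : ℕ)) := by rw [h1]
      unfold pot at hb
      omega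
    · -- query reverse : impossible
      exfalso
      have e1 : (n + 2 - ℓ) * ((b.1 : ℕ)) = (n + 2 - ℓ) * ((u.1 : ℕ)) := by rw [h1]
      unfold pot at hb
      omega
    · -- cross reverse : impossible
      exfalso
      have e1 : (n + 2 - ℓ) * ((u.1 : ℕ)) = (n + 2 - ℓ) * ((b.1 : ℕ)) + (n + 2 - ℓ) := by
        rw [h1]; ring
      unfold pot at hb
      omega

lemma up_row {n : ℕ} (A : Fin n → Fin n → Prop) (U Vq Wq : ℕ → Fin n → Prop) (ℓ : ℕ)
    (hn : 1 ≤ n) (g : Fin 4) (r : Fin n) :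
    ∀ d m (h1 : 1 ≤ m) (h2 : m + d = n),
      (SimpleGraph.fromRel (Rel n A U Vq Wq ℓ)).edist (g, r, ⟨m, by omega⟩) (g, r, ⟨n, Nat.lt_succ_self n⟩)
        ≤ (d : ℕ∞) := by
  intro d
  induction d with
  | zero =>
    intro m h1 h2
    obtain rfl : m = n := by omega
    simp
  | succ d ih =>
    intro m h1 h2
    have hadj : (SimpleGraph.fromRel (Rel n A U Vq Wq ℓ)).Adj
        (g, r, ⟨m, by omega⟩) (g, r, ⟨m + 1, by omega⟩) := by
      refine (SimpleGraph.fromRel_adj _ _ _).mpr ⟨?_, Or.inl (Or.inl ⟨rfl, rfl, h1, rfl⟩)⟩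
      intro e
      have h0 : m = m + 1 := congrArg (fun z => z.2.2.1) e
      omega
    calc (SimpleGraph.fromRel (Rel n A U Vq Wq ℓ)).edist (g, r, ⟨m, by omega⟩) (g, r, ⟨n, Nat.lt_succ_self n⟩)
        ≤ _ + _ := SimpleGraph.edist_triangle (v := (g, r, ⟨m + 1, by omega⟩))
      _ ≤ 1 + (d : ℕ∞) :=
          add_le_add (SimpleGraph.edist_eq_one_iff_adj.mpr hadj).le (ih (m + 1) (by omega) (by omega))
      _ = ((d + 1 : ℕ) : ℕ∞) := by push_cast; ring

lemma gadget_bound {n : ℕ} (A : Fin n → Fin n → Prop) (U Vq Wq : ℕ → Fin n → Prop) (ℓ : ℕ)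
    (hn : 1 ≤ n) (hℓ1 : 1 ≤ ℓ) (hℓn : ℓ ≤ n) (g : ℕ) (hg : g < 4) (r : Fin n)
    (hU : (g = 0 ∨ g = 3) → U ℓ r) (hV : g = 1 → Vq ℓ r) (hW : g = 2 → Wq ℓ r) :
    (SimpleGraph.fromRel (Rel n A U Vq Wq ℓ)).edist (⟨g, hg⟩, r, ⟨0, by omega⟩)
      (⟨g, hg⟩, r, ⟨n, Nat.lt_succ_self n⟩) ≤ ((1 + (n - ℓ) : ℕ) : ℕ∞) := by
  have hadj : (SimpleGraph.fromRel (Rel n A U Vq Wq ℓ)).Adj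
      (⟨g, hg⟩, r, ⟨0, by omega⟩) (⟨g, hg⟩, r, ⟨ℓ, by omega⟩) := by
    refine (SimpleGraph.fromRel_adj _ _ _).mpr
      ⟨?_, Or.inl (Or.inr (Or.inl ⟨rfl, rfl, rfl, hℓ1, le_refl ℓ, hU, hV, hW⟩))⟩
    intro e
    have h0 : (0 : ℕ) = ℓ := congrArg (fun z => z.2.2.1) e
    omega
  calc (SimpleGraph.fromRel (Rel n A U Vq Wq ℓ)).edist (⟨g, hg⟩, r, ⟨0, by omega⟩)
        (⟨g, hg⟩, r, ⟨n, Nat.lt_succ_self n⟩)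
      ≤ _ + _ := SimpleGraph.edist_triangle (v := (⟨g, hg⟩, r, ⟨ℓ, by omega⟩))
    _ ≤ 1 + ((n - ℓ : ℕ) : ℕ∞) :=
        add_le_add (SimpleGraph.edist_eq_one_iff_adj.mpr hadj).le
          (up_row A U Vq Wq ℓ hn ⟨g, hg⟩ r (n - ℓ) ℓ hℓ1 (by omega))
    _ = ((1 + (n - ℓ) : ℕ) : ℕ∞) := by push_cast; ring

lemma cross_bound {n : ℕ} (A : Fin n → Fin n → Prop) (U Vq Wq : ℕ → Fin n → Prop) (ℓ : ℕ)
    (hn : 1 ≤ n) (g g' : ℕ) (hg : g < 4) (hg' : g' < 4) (h : g' = g + 1)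
    (r r' : Fin n) (hA : A r r') :
    (SimpleGraph.fromRel (Rel n A U Vq Wq ℓ)).edist (⟨g, hg⟩, r, ⟨n, Nat.lt_succ_self n⟩)
      (⟨g', hg'⟩, r', ⟨0, by omega⟩) ≤ 1 := by
  refine (SimpleGraph.edist_eq_one_iff_adj.mpr ?_).le
  refine (SimpleGraph.fromRel_adj _ _ _).mpr ⟨?_, Or.inl (Or.inr (Or.inr ⟨h, rfl, rfl, hA⟩))⟩
  intro e
  have h0 : g = g' := congrArg (fun z => z.1.1) e
  omega

end Omv3Aux

theorem omv3_gadget_distance (n : ℕ) (hn : 1 ≤ n) (A : Fin n → Fin n → Prop)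
    (U Vq Wq : ℕ → Fin n → Prop) (ℓ : ℕ) (hℓ1 : 1 ≤ ℓ) (hℓn : ℓ ≤ n)
    (Gℓ : SimpleGraph (Fin 4 × Fin n × Fin (n + 1)))
    (hG : Gℓ = SimpleGraph.fromRel (fun x y =>
      (x.1 = y.1 ∧ x.2.1 = y.2.1 ∧ 1 ≤ (x.2.2 : ℕ) ∧ (y.2.2 : ℕ) = (x.2.2 : ℕ) + 1) ∨
      (x.1 = y.1 ∧ x.2.1 = y.2.1 ∧ (x.2.2 : ℕ) = 0 ∧ 1 ≤ (y.2.2 : ℕ) ∧ (y.2.2 : ℕ) ≤ ℓ ∧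
        (((x.1 : ℕ) = 0 ∨ (x.1 : ℕ) = 3) → U (y.2.2 : ℕ) x.2.1) ∧
        ((x.1 : ℕ) = 1 → Vq (y.2.2 : ℕ) x.2.1) ∧
        ((x.1 : ℕ) = 2 → Wq (y.2.2 : ℕ) x.2.1)) ∨
      ((y.1 : ℕ) = (x.1 : ℕ) + 1 ∧ (x.2.2 : ℕ) = n ∧ (y.2.2 : ℕ) = 0 ∧ A x.2.1 y.2.1))) :
    ∀ i : Fin n,
      (((3 + 4 * (n + 1 - ℓ) : ℕ) : ℕ∞) ≤
          Gℓ.edist (⟨0, by omega⟩, i, ⟨0, by omega⟩) (⟨3, by omega⟩, i, ⟨n, by omega⟩)) ∧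
        (Gℓ.edist (⟨0, by omega⟩, i, ⟨0, by omega⟩) (⟨3, by omega⟩, i, ⟨n, by omega⟩) =
            ((3 + 4 * (n + 1 - ℓ) : ℕ) : ℕ∞) ↔
          ∃ j k : Fin n, U ℓ i ∧ Vq ℓ j ∧ Wq ℓ k ∧ A i j ∧ A j k ∧ A k i) := by
  have hGG : Gℓ = SimpleGraph.fromRel (Omv3Aux.Rel n A U Vq Wq ℓ) := hG
  intro i
  rw [hGG]
  have hpots : Omv3Aux.pot n ℓ ((⟨0, by omega⟩ : Fin 4), i, (⟨0, by omega⟩ : Fin (n + 1))) = 0 := by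
    show (n + 2 - ℓ) * 0 + min 0 1 + (max 0 ℓ - ℓ) = 0
    omega
  have hpott : Omv3Aux.pot n ℓ ((⟨3, by omega⟩ : Fin 4), i, (⟨n, by omega⟩ : Fin (n + 1))) =
      3 + 4 * (n + 1 - ℓ) := by
    show (n + 2 - ℓ) * 3 + min n 1 + (max n ℓ - ℓ) = 3 + 4 * (n + 1 - ℓ)
    omega
  have hlb : ((3 + 4 * (n + 1 - ℓ) : ℕ) : ℕ∞) ≤
      (SimpleGraph.fromRel (Omv3Aux.Rel n A U Vq Wq ℓ)).edist
        (⟨0, by omega⟩, i, ⟨0, by omega⟩) (⟨3, by omega⟩, i, ⟨n, by omega⟩) := by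
    rcases eq_or_ne ((SimpleGraph.fromRel (Omv3Aux.Rel n A U Vq Wq ℓ)).edist
        (⟨0, by omega⟩, i, ⟨0, by omega⟩) (⟨3, by omega⟩, i, ⟨n, by omega⟩)) ⊤ with h | h
    · rw [h]; exact le_top
    · obtain ⟨w, hw⟩ := SimpleGraph.exists_walk_of_edist_ne_top h
      rw [← hw]
      have h2 := Omv3Aux.pot_walk hn hℓ1 hℓn w
      rw [hpots, hpott] at h2
      have h3 : (3 + 4 * (n + 1 - ℓ)) ≤ w.length := by omega
      exact_mod_cast Nat.cast_le.mpr h3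
  refine ⟨hlb, ?_, ?_⟩
  · intro hEq
    obtain ⟨w, hw⟩ := SimpleGraph.exists_walk_of_edist_eq_coe hEq
    have hK := Omv3Aux.key hn hℓ1 hℓn i _ _ w rfl (by rw [hpots, hpott, hw]; omega)
    obtain ⟨c0, -⟩ := hK
    obtain ⟨⟨j, k, h1, h2, h3, h4, h5⟩, hUi, -⟩ := c0 rfl
    exact ⟨j, k, hUi, h2, h4, h1, h3, h5⟩
  · rintro ⟨j, k, hU, hV, hW, hAij, hAjk, hAki⟩
    refine le_antisymm ?_ hlb
    have E0 := Omv3Aux.gadget_bound A U Vq Wq ℓ hn hℓ1 hℓn 0 (by omega) i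
      (fun _ => hU) (fun h => absurd h (by omega)) (fun h => absurd h (by omega))
    have E1 := Omv3Aux.cross_bound A U Vq Wq ℓ hn 0 1 (by omega) (by omega) rfl i j hAij
    have E2 := Omv3Aux.gadget_bound A U Vq Wq ℓ hn hℓ1 hℓn 1 (by omega) j
      (fun h => absurd h (by omega)) (fun _ => hV) (fun h => absurd h (by omega))
    have E3 := Omv3Aux.cross_bound A U Vq Wq ℓ hn 1 2 (by omega) (by omega) rfl j k hAjk
    have E4 := Omv3Aux.gadget_bound A U Vq Wq ℓ hn hℓ1 hℓn 2 (by omega) k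
      (fun h => absurd h (by omega)) (fun h => absurd h (by omega)) (fun _ => hW)
    have E5 := Omv3Aux.cross_bound A U Vq Wq ℓ hn 2 3 (by omega) (by omega) rfl k i hAki
    have E6 := Omv3Aux.gadget_bound A U Vq Wq ℓ hn hℓ1 hℓn 3 (by omega) i
      (fun _ => hU) (fun h => absurd h (by omega)) (fun h => absurd h (by omega))
    set G := SimpleGraph.fromRel (Omv3Aux.Rel n A U Vq Wq ℓ) with hGdef
    have T : ∀ (a c b : Fin 4 × Fin n × Fin (n + 1)) (x y : ℕ∞),
        G.edist a c ≤ x → G.edist c b ≤ y → G.edist a b ≤ x + y :=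
      fun a c b x y h1 h2 => le_trans (SimpleGraph.edist_triangle) (add_le_add h1 h2)
    have S2 := T _ _ _ _ _ E5 E6
    have S3 := T _ _ _ _ _ E4 S2
    have S4 := T _ _ _ _ _ E3 S3
    have S5 := T _ _ _ _ _ E2 S4
    have S6 := T _ _ _ _ _ E1 S5
    have S7 := T _ _ _ _ _ E0 S6
    have htot : ((1 + (n - ℓ) : ℕ) : ℕ∞) + (1 + (((1 + (n - ℓ) : ℕ) : ℕ∞) +
        (1 + (((1 + (n - ℓ) : ℕ) : ℕ∞) + (1 + ((1 + (n - ℓ) : ℕ) : ℕ∞)))))) =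
        ((3 + 4 * (n + 1 - ℓ) : ℕ) : ℕ∞) := by
      rw [show (3 + 4 * (n + 1 - ℓ) : ℕ) =
        (1 + (n - ℓ)) + (1 + ((1 + (n - ℓ)) + (1 + ((1 + (n - ℓ)) + (1 + (1 + (n - ℓ))))))) from by omega]
      push_cast
      ring
    exact le_trans S7 (le_of_eq htot)
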